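/- arXiv:2106.15603 — 4 statements merged into one kernel-verified Lean document; each statement's English description precedes it below -/
import Mathlib

section
/- For every fixed real n > 2, there exists a unique q_n ∈ (0,1) such that g(q_n, n) = 0; moreover g(q,n) < 0 for all q ∈ (q_n, 1) and g(q,n) > 0 for all q ∈ (0, q_n). -/
open Real Set

/-- For every fixed real `n > 2`, there is a unique `q_n ∈ (0,1)` with
`g(q_n,n) = 0`, where `g(q,n) = 2/n - 2 q^n + q^(2n-1)`; moreover `g(q,n) < 0`
for `q ∈ (q_n,1)` and `g(q,n) > 0` for `q ∈ (0,q_n)`. -/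
theorem stmt_2 (n : ℝ) (hn : 2 < n) :
    ∃ qn ∈ Set.Ioo (0 : ℝ) 1,
      (2 / n - 2 * qn ^ n + qn ^ (2 * n - 1) = 0) ∧
      (∀ q ∈ Set.Ioo (0 : ℝ) 1, 2 / n - 2 * q ^ n + q ^ (2 * n - 1) = 0 → q = qn) ∧
      (∀ q ∈ Set.Ioo qn 1, 2 / n - 2 * q ^ n + q ^ (2 * n - 1) < 0) ∧
      (∀ q ∈ Set.Ioo (0 : ℝ) qn, 0 < 2 / n - 2 * q ^ n + q ^ (2 * n - 1)) := by
  have hn0 : (0:ℝ) < n := by linarith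
  have hm0 : (0:ℝ) < 2 * n - 1 := by linarith
  set f : ℝ → ℝ := fun q => 2 / n - 2 * q ^ n + q ^ (2 * n - 1) with hfdef
  have hcont : ContinuousOn f (Set.Icc 0 1) := by
    intro x hx
    have h1 : ContinuousAt (fun q : ℝ => q ^ n) x :=
      Real.continuousAt_rpow_const x n (Or.inr hn0.le)
    have h2 : ContinuousAt (fun q : ℝ => q ^ (2 * n - 1)) x :=
      Real.continuousAt_rpow_const x (2 * n - 1) (Or.inr hm0.le)
    exact (((continuousAt_const.sub (h1.const_mul 2)).add h2)).continuousWithinAt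
  have hanti : StrictAntiOn f (Set.Icc 0 1) := by
    apply strictAntiOn_of_deriv_neg (convex_Icc 0 1) hcont
    intro x hx
    rw [interior_Icc] at hx
    have hx0 : (0:ℝ) < x := hx.1
    have hd1 : HasDerivAt (fun q : ℝ => q ^ n) (n * x ^ (n - 1)) x :=
      Real.hasDerivAt_rpow_const (Or.inl hx0.ne')
    have hd2 : HasDerivAt (fun q : ℝ => q ^ (2 * n - 1)) ((2 * n - 1) * x ^ (2 * n - 1 - 1)) x :=
      Real.hasDerivAt_rpow_const (Or.inl hx0.ne')
    have hd : HasDerivAt f (0 - 2 * (n * x ^ (n - 1)) + (2 * n - 1) * x ^ (2 * n - 1 - 1)) x :=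
      ((hasDerivAt_const x (2 / n)).sub (hd1.const_mul 2)).add hd2
    rw [hd.deriv]
    have hp0 : (0:ℝ) < x ^ (n - 1) := Real.rpow_pos_of_pos hx0 _
    have hp1 : x ^ (n - 1) < 1 := Real.rpow_lt_one hx0.le hx.2 (by linarith)
    have hsplit : x ^ (2 * n - 1 - 1) = x ^ (n - 1) * x ^ (n - 1) := by
      rw [← Real.rpow_add hx0]; ring_nf
    rw [hsplit]
    nlinarith [mul_pos hp0 hp0, mul_lt_mul_of_pos_right hp1 hp0]
  have hf0 : f 0 = 2 / n := by
    simp [hfdef, Real.zero_rpow hn0.ne', Real.zero_rpow hm0.ne']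
  have hf1 : f 1 = 2 / n - 1 := by
    simp [hfdef]; ring
  have hf0pos : 0 < f 0 := by rw [hf0]; positivity
  have hf1neg : f 1 < 0 := by
    rw [hf1]
    have : 2 / n < 1 := by rw [div_lt_one hn0]; linarith
    linarith
  obtain ⟨qn, hqnmem, hqn0⟩ :
      ∃ qn ∈ Set.Icc (0:ℝ) 1, f qn = 0 := by
    have := intermediate_value_Icc' (by norm_num : (0:ℝ) ≤ 1) hcont
    have h0 : (0:ℝ) ∈ Set.Icc (f 1) (f 0) := ⟨hf1neg.le, hf0pos.le⟩
    obtain ⟨c, hc, hc0⟩ := this h0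
    exact ⟨c, hc, hc0⟩
  have hqnIoo : qn ∈ Set.Ioo (0:ℝ) 1 := by
    constructor
    · rcases hqnmem.1.lt_or_eq with h | h
      · exact h
      · exfalso; rw [← h] at hqn0; linarith
    · rcases hqnmem.2.lt_or_eq with h | h
      · exact h
      · exfalso; rw [h] at hqn0; linarith
  refine ⟨qn, hqnIoo, hqn0, ?_, ?_, ?_⟩
  · intro q hq hq0
    have hq0' : f q = 0 := hq0
    by_contra hne
    rcases lt_or_gt_of_ne hne with h | h
    · have := hanti ⟨hq.1.le, hq.2.le⟩ ⟨hqnmem.1, hqnmem.2⟩ h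
      rw [hq0', hqn0] at this; exact lt_irrefl 0 this
    · have := hanti ⟨hqnmem.1, hqnmem.2⟩ ⟨hq.1.le, hq.2.le⟩ h
      rw [hq0', hqn0] at this; exact lt_irrefl 0 this
  · intro q hq
    have := hanti ⟨hqnmem.1, hqnmem.2⟩ ⟨(hqnIoo.1.trans hq.1).le, hq.2.le⟩ hq.1
    rw [hqn0] at this; exact this
  · intro q hq
    have := hanti ⟨hq.1.le, (hq.2.trans hqnIoo.2).le⟩ ⟨hqnmem.1, hqnmem.2⟩ hq.2
    rw [hqn0] at this; exact this
end

section
/- For every real n > 2 and every q ∈ (0, 1/2], g(q,n) > 0. -/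
open Real Set

/-- For every real `n > 2` and every `q ∈ (0, 1/2]`, `g(q,n) > 0`, where
`g(q,n) = 2/n - 2 q^n + q^(2n-1)` with real powers. -/
theorem stmt_4 (n : ℝ) (hn : 2 < n) (q : ℝ) (hq : q ∈ Set.Ioc (0 : ℝ) (1 / 2)) :
    0 < 2 / n - 2 * q ^ n + q ^ (2 * n - 1) := by
  obtain ⟨hq0, hq1⟩ := hq
  have hn0 : (0:ℝ) < n := by linarith
  -- key: n < 2^n
  have h2n : n < (2:ℝ) ^ n := by
    have hsplit : (2:ℝ) ^ n = 4 * (2:ℝ) ^ (n - 2) := by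
      have h4 : (2:ℝ) ^ (2:ℝ) = 4 := by
        rw [show (2:ℝ) = ((2:ℕ):ℝ) from by norm_num]
        rw [Real.rpow_natCast]; norm_num
      calc (2:ℝ) ^ n = (2:ℝ) ^ (2 + (n - 2)) := by ring_nf
        _ = (2:ℝ) ^ (2:ℝ) * (2:ℝ) ^ (n - 2) := Real.rpow_add (by norm_num) _ _
        _ = 4 * (2:ℝ) ^ (n - 2) := by rw [h4]
    have hexp : 1 + Real.log 2 * (n - 2) ≤ (2:ℝ) ^ (n - 2) := by
      rw [Real.rpow_def_of_pos (by norm_num)]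
      have := Real.add_one_le_exp (Real.log 2 * (n - 2))
      linarith
    have hl2 : (0.6931471803 : ℝ) < Real.log 2 := Real.log_two_gt_d9
    nlinarith [hexp, hl2, hn]
  have hqn : q ^ n ≤ (1/2:ℝ) ^ n := Real.rpow_le_rpow hq0.le hq1 hn0.le
  have hhalf : (1/2:ℝ) ^ n = 1 / (2:ℝ) ^ n := by
    rw [Real.div_rpow (by norm_num) (by norm_num), Real.one_rpow]
  have hlt : (1:ℝ) / (2:ℝ) ^ n < 1 / n := by
    apply one_div_lt_one_div_of_lt hn0 h2n
  have hpos : 0 < q ^ (2 * n - 1) := Real.rpow_pos_of_pos hq0 _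
  have hfin : q ^ n < 1 / n := by
    calc q ^ n ≤ (1/2:ℝ) ^ n := hqn
      _ = 1 / (2:ℝ) ^ n := hhalf
      _ < 1 / n := hlt
  have heq : 2 / n = 2 * (1 / n) := by ring
  linarith
end

section
/- For every ε > 0 sufficiently small, g(1-ε, 2+ε) > 0; more precisely, there exists ε₀ > 0 such that for all ε ∈ (0, ε₀), 2/(2+ε) - 2(1-ε)^{2+ε} + (1-ε)^{2(2+ε)-1} > 0. -/
open Real Set

/-- There exists `ε₀ > 0` such that for all `ε ∈ (0, ε₀)`,
`g(1-ε, 2+ε) = 2/(2+ε) - 2(1-ε)^(2+ε) + (1-ε)^(2(2+ε)-1) > 0` (real powers). -/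
theorem stmt_5 :
    ∃ ε₀ > (0 : ℝ), ∀ ε ∈ Set.Ioo (0 : ℝ) ε₀,
      0 < 2 / (2 + ε) - 2 * (1 - ε) ^ (2 + ε) + (1 - ε) ^ (2 * (2 + ε) - 1) := by
  refine ⟨1/100, by norm_num, ?_⟩
  rintro ε ⟨hε0, hε1⟩
  have hx : (0:ℝ) < 1 - ε := by linarith
  set L := Real.log (1 - ε) with hLdef
  -- upper bound on log
  have hL1 : L ≤ -ε := by
    have := Real.log_le_sub_one_of_pos hx
    linarith
  -- lower bound on log
  have hL2 : -(ε + 2*ε^2) ≤ L := by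
    have h1 : Real.log (1-ε)⁻¹ ≤ (1-ε)⁻¹ - 1 := Real.log_le_sub_one_of_pos (by positivity)
    rw [Real.log_inv] at h1
    have hinv : (1-ε)⁻¹ * (1-ε) = 1 := inv_mul_cancel₀ hx.ne'
    have h2 : (1-ε)⁻¹ ≤ 1 + ε + 2*ε^2 := by
      nlinarith [hinv, sq_nonneg ε, hx]
    linarith
  -- upper bound on A = (1-ε)^(2+ε)
  have hA : (1-ε) ^ (2+ε) ≤ 1/(1+2*ε) := by
    rw [Real.rpow_def_of_pos hx]
    have e1 : L * (2+ε) ≤ -(2*ε) := by nlinarith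
    calc Real.exp (L*(2+ε)) ≤ Real.exp (-(2*ε)) := Real.exp_le_exp.mpr e1
      _ ≤ 1/(1+2*ε) := by
          rw [le_div_iff₀ (by linarith)]
          calc Real.exp (-(2*ε)) * (1+2*ε)
              ≤ Real.exp (-(2*ε)) * Real.exp (2*ε) := by
                have := Real.add_one_le_exp (2*ε)
                have h := Real.exp_pos (-(2*ε))
                nlinarith
            _ = 1 := by rw [← Real.exp_add]; norm_num
  have hA2 : 1/(1+2*ε) ≤ 1 - 2*ε + 4*ε^2 := by
    rw [div_le_iff₀ (by linarith)]
    nlinarith [sq_nonneg ε, pow_pos hε0 3]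
  -- lower bound on B = (1-ε)^(3+2ε)
  have hB : 1 - 3*ε - 9*ε^2 ≤ (1-ε) ^ (2*(2+ε)-1) := by
    rw [Real.rpow_def_of_pos hx]
    have e2 : -(3*ε + 9*ε^2) ≤ L * (2*(2+ε)-1) := by
      nlinarith [mul_nonneg (by linarith : (0:ℝ) ≤ L + (ε + 2*ε^2)) (by linarith : (0:ℝ) ≤ 3 + 2*ε)]
    calc 1 - 3*ε - 9*ε^2 = -(3*ε + 9*ε^2) + 1 := by ring
      _ ≤ Real.exp (-(3*ε + 9*ε^2)) := Real.add_one_le_exp _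
      _ ≤ Real.exp (L * (2*(2+ε)-1)) := Real.exp_le_exp.mpr e2
  -- lower bound on 2/(2+ε)
  have hC : 1 - ε/2 ≤ 2/(2+ε) := by
    rw [le_div_iff₀ (by linarith)]
    nlinarith [sq_nonneg ε]
  -- combine
  have hAfull : (1-ε) ^ (2+ε) ≤ 1 - 2*ε + 4*ε^2 := le_trans hA hA2
  nlinarith [hAfull, hB, hC, sq_nonneg ε]
end

section
/- The expected number of tests in the A2 square array scheme satisfies: under the binomial testing assumptions with healthy probability q, for an n×n array (n ≥ 2 integer) of i.i.d. Bernoulli(1-q) infection indicators, the expected total number of tests equals 2n + n²(1 - 2q^n + q^{2n-1}), where the tests are: n row pools, n column pools, and one confirmatory test for each cell lying in both a positive row and a positive column. -/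
open MeasureTheory Set

open scoped Classical in
private lemma pi_all_false (n : ℕ) (q : ℝ) (hq : q ∈ Set.Ioo (0 : ℝ) 1)
    (hple : ENNReal.ofReal (1 - q) ≤ 1) (S : Finset (Fin n × Fin n)) :
    (Measure.pi fun _ : Fin n × Fin n =>
      (PMF.bernoulli (ENNReal.ofReal (1 - q)).toNNReal
        (by simpa using ENNReal.toNNReal_mono ENNReal.one_ne_top hple)).toMeasure)
      {ω | ∀ s ∈ S, ω s = false} = ENNReal.ofReal q ^ S.card := by
  set ν := (PMF.bernoulli (ENNReal.ofReal (1 - q)).toNNReal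
        (by simpa using ENNReal.toNNReal_mono ENNReal.one_ne_top hple)).toMeasure with hν
  have hfalse : ν {false} = ENNReal.ofReal q := by
    rw [hν, PMF.toMeasure_apply_singleton _ _ (measurableSet_singleton _)]
    erw [PMF.bernoulli_apply]
    simp only [Bool.cond_false]
    rw [ENNReal.coe_sub, ENNReal.coe_one, ENNReal.coe_toNNReal ENNReal.ofReal_ne_top]
    rw [← ENNReal.ofReal_one, ← ENNReal.ofReal_sub _ (by linarith [hq.2])]
    ring_nf
  have hset : {ω : (Fin n × Fin n) → Bool | ∀ s ∈ S, ω s = false}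
      = Set.univ.pi (fun i => if i ∈ S then ({false} : Set Bool) else Set.univ) := by
    ext ω
    simp only [Set.mem_setOf_eq, Set.mem_pi, Set.mem_univ, forall_true_left]
    constructor
    · intro h i
      by_cases hi : i ∈ S <;> simp [hi, h]
    · intro h s hs
      have := h s
      simpa [hs] using this
  rw [hset, Measure.pi_pi]
  have : ∀ i : Fin n × Fin n,
      ν (if i ∈ S then ({false} : Set Bool) else Set.univ)
        = if i ∈ S then ENNReal.ofReal q else 1 := by
    haveI : IsProbabilityMeasure ν := by rw [hν]; infer_instance
    intro i; split
    · exact hfalse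
    · exact measure_univ
  rw [Finset.prod_congr rfl (fun i _ => this i), Finset.prod_ite_mem,
    Finset.univ_inter, Finset.prod_const]

open scoped Classical in
private lemma cell_prob (n : ℕ) (hn : 2 ≤ n) (q : ℝ) (hq : q ∈ Set.Ioo (0 : ℝ) 1)
    (hple : ENNReal.ofReal (1 - q) ≤ 1) (ij : Fin n × Fin n) :
    ((Measure.pi fun _ : Fin n × Fin n =>
      (PMF.bernoulli (ENNReal.ofReal (1 - q)).toNNReal
        (by simpa using ENNReal.toNNReal_mono ENNReal.one_ne_top hple)).toMeasure)
      {ω | (∃ j' : Fin n, ω (ij.1, j') = true) ∧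
        (∃ i' : Fin n, ω (i', ij.2) = true)}).toReal
      = 1 - 2 * q ^ n + q ^ (2 * n - 1) := by
  set μ := (Measure.pi fun _ : Fin n × Fin n =>
      (PMF.bernoulli (ENNReal.ofReal (1 - q)).toNNReal
        (by simpa using ENNReal.toNNReal_mono ENNReal.one_ne_top hple)).toMeasure) with hμ
  haveI : IsProbabilityMeasure μ := by rw [hμ]; infer_instance
  have hmeas : ∀ s : Set ((Fin n × Fin n) → Bool), MeasurableSet s :=
    fun s => s.to_countable.measurableSet
  set Sr : Finset (Fin n × Fin n) := {ij.1} ×ˢ Finset.univ with hSr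
  set Sc : Finset (Fin n × Fin n) := Finset.univ ×ˢ {ij.2} with hSc
  set A : Set ((Fin n × Fin n) → Bool) := {ω | ∃ j' : Fin n, ω (ij.1, j') = true}
  set B : Set ((Fin n × Fin n) → Bool) := {ω | ∃ i' : Fin n, ω (i', ij.2) = true}
  have hAc : Aᶜ = {ω | ∀ s ∈ Sr, ω s = false} := by
    ext ω
    simp only [Set.mem_compl_iff, Set.mem_setOf_eq, not_exists, Bool.not_eq_true, A, hSr,
      Finset.mem_product, Finset.mem_singleton, Finset.mem_univ, and_true, Prod.forall]
    constructor
    · rintro h a b rfl; exact h b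
    · intro h j'; exact h ij.1 j' rfl
  have hBc : Bᶜ = {ω | ∀ s ∈ Sc, ω s = false} := by
    ext ω
    simp only [Set.mem_compl_iff, Set.mem_setOf_eq, not_exists, Bool.not_eq_true, B, hSc,
      Finset.mem_product, Finset.mem_singleton, Finset.mem_univ, true_and, Prod.forall]
    constructor
    · rintro h a b rfl; exact h a
    · intro h i'; exact h i' ij.2 rfl
  have hAcBc : Aᶜ ∩ Bᶜ = {ω | ∀ s ∈ Sr ∪ Sc, ω s = false} := by
    rw [hAc, hBc]; ext ω
    simp only [Set.mem_inter_iff, Set.mem_setOf_eq, Finset.mem_union]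
    constructor
    · rintro ⟨h1, h2⟩ s (hs | hs); exacts [h1 s hs, h2 s hs]
    · intro h; exact ⟨fun s hs => h s (Or.inl hs), fun s hs => h s (Or.inr hs)⟩
  have hcardr : Sr.card = n := by simp [hSr]
  have hcardc : Sc.card = n := by simp [hSc]
  have hinter : Sr ∩ Sc = {ij} := by
    ext s
    simp only [Finset.mem_inter, hSr, hSc, Finset.mem_product, Finset.mem_singleton,
      Finset.mem_univ, and_true, true_and]
    constructor
    · rintro ⟨h1, h2⟩; exact Prod.ext h1 h2
    · rintro rfl; exact ⟨rfl, rfl⟩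
  have hcardu : (Sr ∪ Sc).card = 2 * n - 1 := by
    have := Finset.card_union_add_card_inter Sr Sc
    rw [hinter, hcardr, hcardc, Finset.card_singleton] at this
    omega
  have hq0 : (0:ℝ) ≤ q := le_of_lt hq.1
  have hμAc : μ Aᶜ = ENNReal.ofReal (q ^ n) := by
    rw [hAc, hμ, pi_all_false n q hq hple, hcardr, ← ENNReal.ofReal_pow hq0]
  have hμBc : μ Bᶜ = ENNReal.ofReal (q ^ n) := by
    rw [hBc, hμ, pi_all_false n q hq hple, hcardc, ← ENNReal.ofReal_pow hq0]
  have hμAcBc : μ (Aᶜ ∩ Bᶜ) = ENNReal.ofReal (q ^ (2 * n - 1)) := by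
    rw [hAcBc, hμ, pi_all_false n q hq hple, hcardu, ← ENNReal.ofReal_pow hq0]
  have hEc : (A ∩ B)ᶜ = Aᶜ ∪ Bᶜ := Set.compl_inter A B
  have hunion : μ (Aᶜ ∪ Bᶜ) + μ (Aᶜ ∩ Bᶜ) = μ Aᶜ + μ Bᶜ :=
    measure_union_add_inter' (hmeas _) _
  have hfin : μ (Aᶜ ∪ Bᶜ) ≠ ⊤ := measure_ne_top μ _
  have htr : (μ (Aᶜ ∪ Bᶜ)).toReal + q ^ (2 * n - 1) = q ^ n + q ^ n := by
    have := congrArg ENNReal.toReal hunion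
    rw [ENNReal.toReal_add hfin (measure_ne_top μ _),
      ENNReal.toReal_add (measure_ne_top μ _) (measure_ne_top μ _),
      hμAc, hμBc, hμAcBc] at this
    simpa only [ENNReal.toReal_ofReal (pow_nonneg hq0 n),
      ENNReal.toReal_ofReal (pow_nonneg hq0 (2 * n - 1))] using this
  have hcompl : μ (A ∩ B) = 1 - μ ((A ∩ B)ᶜ) := by
    rw [← prob_compl_eq_one_sub (hmeas _), compl_compl]
  have hle1 : μ ((A ∩ B)ᶜ) ≤ 1 := prob_le_one
  have : (μ (A ∩ B)).toReal = 1 - (μ ((A ∩ B)ᶜ)).toReal := by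
    rw [hcompl, ENNReal.toReal_sub_of_le hle1 ENNReal.one_ne_top, ENNReal.toReal_one]
  rw [show {ω : (Fin n × Fin n) → Bool | (∃ j' : Fin n, ω (ij.1, j') = true) ∧
        (∃ i' : Fin n, ω (i', ij.2) = true)} = A ∩ B from rfl, this, hEc]
  linarith [htr]

open scoped Classical in
/-- A2 square-array scheme under binomial testing assumptions: for an `n×n`
array (`n ≥ 2`) of i.i.d. Bernoulli(`1-q`) infection indicators, the expected
total number of tests (the `n` row pools, the `n` column pools, plus one
confirmatory test for each cell lying in a positive row and a positive column)
equals `2n + n²(1 - 2q^n + q^(2n-1))`. -/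
theorem stmt_17 (n : ℕ) (hn : 2 ≤ n) (q : ℝ) (hq : q ∈ Set.Ioo (0 : ℝ) 1)
    (hple : ENNReal.ofReal (1 - q) ≤ 1)
    (μ : Measure ((Fin n × Fin n) → Bool))
    (hμ : μ = Measure.pi fun _ : Fin n × Fin n =>
      (PMF.bernoulli (ENNReal.ofReal (1 - q)).toNNReal
        (by simpa using ENNReal.toNNReal_mono ENNReal.one_ne_top hple)).toMeasure)
    (T : ((Fin n × Fin n) → Bool) → ℝ)
    (hT : T = fun ω : (Fin n × Fin n) → Bool => 2 * n + ((
      (Finset.univ.filter (fun ij : Fin n × Fin n =>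
        (∃ j' : Fin n, ω (ij.1, j') = true) ∧
        (∃ i' : Fin n, ω (i', ij.2) = true))).card) : ℝ)) :
    ∫ ω, T ω ∂μ = 2 * n + n ^ 2 * (1 - 2 * q ^ n + q ^ (2 * n - 1)) := by
  subst hμ hT
  set μ := (Measure.pi fun _ : Fin n × Fin n =>
      (PMF.bernoulli (ENNReal.ofReal (1 - q)).toNNReal
        (by simpa using ENNReal.toNNReal_mono ENNReal.one_ne_top hple)).toMeasure) with hμdef
  haveI : IsProbabilityMeasure μ := by rw [hμdef]; infer_instance
  have hmeas : ∀ s : Set ((Fin n × Fin n) → Bool), MeasurableSet s :=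
    fun s => s.to_countable.measurableSet
  have hcount : ∀ ω : (Fin n × Fin n) → Bool,
      (((Finset.univ.filter (fun ij : Fin n × Fin n =>
        (∃ j' : Fin n, ω (ij.1, j') = true) ∧
        (∃ i' : Fin n, ω (i', ij.2) = true))).card) : ℝ)
      = ∑ ij : Fin n × Fin n, ({ω' | (∃ j' : Fin n, ω' (ij.1, j') = true) ∧
          (∃ i' : Fin n, ω' (i', ij.2) = true)}).indicator (1 : ((Fin n × Fin n) → Bool) → ℝ) ω := by
    intro ω
    rw [Finset.card_filter, Nat.cast_sum]
    refine Finset.sum_congr rfl fun ij _ => ?_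
    rw [Set.indicator_apply]
    split <;> rename_i h
    · simp only [Set.mem_setOf_eq] at h ⊢
      simp [h]
    · simp only [Set.mem_setOf_eq] at h ⊢
      simp [h]
  have hint : ∀ f : ((Fin n × Fin n) → Bool) → ℝ, Integrable f μ :=
    fun f => Integrable.of_finite
  calc ∫ ω, (2 * (n:ℝ) + (((Finset.univ.filter (fun ij : Fin n × Fin n =>
        (∃ j' : Fin n, ω (ij.1, j') = true) ∧
        (∃ i' : Fin n, ω (i', ij.2) = true))).card) : ℝ)) ∂μ
      = ∫ _, (2 * (n:ℝ)) ∂μ + ∫ ω, ∑ ij : Fin n × Fin n,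
          ({ω' | (∃ j' : Fin n, ω' (ij.1, j') = true) ∧
            (∃ i' : Fin n, ω' (i', ij.2) = true)}).indicator (1 : ((Fin n × Fin n) → Bool) → ℝ) ω ∂μ := by
        rw [← integral_add (hint _) (hint _)]
        congr 1
        funext ω
        rw [hcount ω]
    _ = 2 * n + ∑ ij : Fin n × Fin n,
          (μ {ω' | (∃ j' : Fin n, ω' (ij.1, j') = true) ∧
            (∃ i' : Fin n, ω' (i', ij.2) = true)}).toReal := by
        rw [integral_const, probReal_univ, one_smul,
          integral_finset_sum _ (fun ij _ => hint _)]
        congr 1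
        exact Finset.sum_congr rfl fun ij _ => integral_indicator_one (hmeas _)
    _ = 2 * n + n ^ 2 * (1 - 2 * q ^ n + q ^ (2 * n - 1)) := by
        congr 1
        rw [Finset.sum_congr rfl fun ij _ => cell_prob n hn q hq hple ij,
          Finset.sum_const, Finset.card_univ, Fintype.card_prod, Fintype.card_fin,
          nsmul_eq_mul]
        push_cast
        ring
end
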